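/- Let A be a ring and let Γ : Mod(A) → Mod(A) be an additive left-exact functor equipped with a natural transformation σ : Γ → id such that each σ_M : Γ(M) → M is injective (so Γ(M) is naturally a submodule of M), Γ(Γ(M)) = Γ(M) for all M, and Γ(M/Γ(M)) = 0 for all M (i.e. Γ is the torsion functor of a hereditary torsion class). If the right derived functors R^iΓ vanish for all i ≥ 2 (Γ has right cohomological dimension at most one), then for every injective left A-module E one has R^iΓ(Γ(E)) = 0 for all i ≥ 1; that is, Γ(E) is right Γ-acyclic for every injective E, so the torsion class is weakly stable. -/

import Mathlib

open CategoryTheory CategoryTheory.Limits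

universe u

namespace WeaklyStableAux

variable {A : Type u} [Ring A]
variable (Γ : ModuleCat.{u} A ⥤ ModuleCat.{u} A) [Γ.Additive]
variable (σ : Γ ⟶ 𝟭 (ModuleCat.{u} A)) (E : ModuleCat.{u} A)

/-- A chosen injective resolution of `E / Γ E`. -/
noncomputable def I : InjectiveResolution (cokernel (σ.app E)) := InjectiveResolution.of _

/-- The objects of an injective resolution of `Γ E` starting with `E`. -/
noncomputable def Xs : ℕ → ModuleCat.{u} A
  | 0 => E
  | (n+1) => (I Γ σ E).cocomplex.X n

/-- The differentials. -/
noncomputable def ds : ∀ n, Xs Γ σ E n ⟶ Xs Γ σ E (n+1)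
  | 0 => cokernel.π (σ.app E) ≫ (I Γ σ E).ι.f 0
  | (n+1) => (I Γ σ E).cocomplex.d n (n+1)

/-- The cochain complex `E ⟶ I^0 ⟶ I^1 ⟶ ⋯`. -/
noncomputable def J : CochainComplex (ModuleCat.{u} A) ℕ :=
  CochainComplex.of (Xs Γ σ E) (ds Γ σ E) (by
    rintro (_|n)
    · show (cokernel.π (σ.app E) ≫ (I Γ σ E).ι.f 0) ≫ (I Γ σ E).cocomplex.d 0 1 = 0
      erw [Category.assoc, (I Γ σ E).ι_f_zero_comp_complex_d, comp_zero]
    · exact (I Γ σ E).cocomplex.d_comp_d _ _ _)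

lemma J_d0 : (J Γ σ E).d 0 1 = cokernel.π (σ.app E) ≫ (I Γ σ E).ι.f 0 :=
  CochainComplex.of_d (Xs Γ σ E) (ds Γ σ E) 0

lemma J_d_succ (n : ℕ) : (J Γ σ E).d (n+1) (n+2) = (I Γ σ E).cocomplex.d n (n+1) :=
  CochainComplex.of_d (Xs Γ σ E) (ds Γ σ E) (n+1)

lemma J_exactAt_succ (n : ℕ) : (J Γ σ E).ExactAt (n+1) := by
  rw [HomologicalComplex.exactAt_iff' _ n (n+1) (n+2) (by simp) (by simp)]
  cases n with
  | zero =>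
    have h1 : (ShortComplex.mk ((I Γ σ E).ι.f 0) ((I Γ σ E).cocomplex.d 0 1)
        (I Γ σ E).ι_f_zero_comp_complex_d).Exact :=
      ShortComplex.exact_of_f_is_kernel _ (I Γ σ E).isLimitKernelFork
    haveI : @Epi (ModuleCat A) _ ((J Γ σ E).sc' 0 1 2).X₁
        (((CochainComplex.single₀ _).obj (cokernel (σ.app E))).X 0) (cokernel.π (σ.app E)) :=
      inferInstanceAs (Epi (cokernel.π (σ.app E)))
    haveI : @IsIso (ModuleCat A) _ ((J Γ σ E).sc' 0 1 2).X₂ ((I Γ σ E).cocomplex.X 0) (𝟙 _) :=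
      inferInstanceAs (IsIso (𝟙 ((I Γ σ E).cocomplex.X 0)))
    haveI : @Mono (ModuleCat A) _ ((J Γ σ E).sc' 0 1 2).X₃ ((I Γ σ E).cocomplex.X 1) (𝟙 _) :=
      inferInstanceAs (Mono (𝟙 ((I Γ σ E).cocomplex.X 1)))
    refine (ShortComplex.exact_iff_of_epi_of_isIso_of_mono
      (S₁ := (J Γ σ E).sc' 0 1 2)
      (S₂ := ShortComplex.mk ((I Γ σ E).ι.f 0) ((I Γ σ E).cocomplex.d 0 1)
        (I Γ σ E).ι_f_zero_comp_complex_d)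
      { τ₁ := cokernel.π (σ.app E)
        τ₂ := 𝟙 _
        τ₃ := 𝟙 _
        comm₁₂ := by dsimp; erw [Category.comp_id]; exact (J_d0 Γ σ E).symm
        comm₂₃ := by dsimp; erw [Category.comp_id, Category.id_comp]; exact (J_d_succ Γ σ E 0).symm }).2 h1
  | succ n =>
    refine (ShortComplex.exact_iff_of_iso
      (S₁ := ShortComplex.mk ((I Γ σ E).cocomplex.d n (n+1)) ((I Γ σ E).cocomplex.d (n+1) (n+2))
        ((I Γ σ E).cocomplex.d_comp_d _ _ _))
      (S₂ := (J Γ σ E).sc' (n+1) (n+2) (n+3))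
      (ShortComplex.isoMk (Iso.refl _) (Iso.refl _) (Iso.refl _)
        (by dsimp; erw [Category.comp_id, Category.id_comp]; exact J_d_succ Γ σ E n)
        (by dsimp; erw [Category.comp_id, Category.id_comp]; exact J_d_succ Γ σ E (n+1)))).1
      ((I Γ σ E).exact_succ n)

lemma S0_exact [Mono (σ.app E)] :
    (ShortComplex.mk (σ.app E) ((J Γ σ E).d 0 1)
      (by erw [J_d0, ← Category.assoc, cokernel.condition, zero_comp])).Exact := by
  have h0 : (ShortComplex.mk (σ.app E) (cokernel.π (σ.app E))
      (cokernel.condition _)).Exact :=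
    ShortComplex.exact_of_g_is_cokernel _ (cokernelIsCokernel _)
  haveI : @Mono (ModuleCat A) _ (cokernel (σ.app E)) ((J Γ σ E).X 1) ((I Γ σ E).ι.f 0) :=
    inferInstanceAs (Mono ((I Γ σ E).ι.f 0))
  exact (ShortComplex.exact_iff_of_epi_of_isIso_of_mono
    (S₁ := ShortComplex.mk (σ.app E) (cokernel.π (σ.app E)) (cokernel.condition _))
    (S₂ := ShortComplex.mk (σ.app E) ((J Γ σ E).d 0 1)
      (by erw [J_d0, ← Category.assoc, cokernel.condition, zero_comp]))
    { τ₁ := 𝟙 _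
      τ₂ := 𝟙 _
      τ₃ := (I Γ σ E).ι.f 0
      comm₁₂ := by dsimp; rw [Category.comp_id, Category.id_comp]
      comm₂₃ := by dsimp; erw [Category.id_comp, J_d0] }).1 h0

/-- The injective resolution of `Γ E` starting with `E`. -/
noncomputable def res [Injective E] [Mono (σ.app E)] : InjectiveResolution (Γ.obj E) where
  cocomplex := J Γ σ E
  injective n := by
    cases n with
    | zero => exact (inferInstance : Injective E)
    | succ k => exact (I Γ σ E).injective k
  ι := (CochainComplex.fromSingle₀Equiv _ _).symm ⟨σ.app E, by
      erw [J_d0, ← Category.assoc, cokernel.condition, zero_comp]⟩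
  quasiIso := ⟨fun n => by
    cases n with
    | zero =>
      rw [CochainComplex.quasiIsoAt₀_iff, ShortComplex.quasiIso_iff_of_zeros]
      · refine (ShortComplex.exact_and_mono_f_iff_of_iso ?_).2
          ⟨S0_exact Γ σ E, inferInstance⟩
        exact ShortComplex.isoMk (Iso.refl _) (Iso.refl _) (Iso.refl _) (by erw [Category.id_comp])
          (by erw [Category.id_comp])
      all_goals rfl
    | succ n =>
      rw [quasiIsoAt_iff_exactAt]
      · exact J_exactAt_succ Γ σ E n
      · exact CochainComplex.exactAt_succ_single_obj _ _⟩

end WeaklyStableAux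

/-- Let `A` be a ring and `Γ : Mod(A) ⥤ Mod(A)` an additive left-exact functor together with
a natural transformation `σ : Γ ⟶ 𝟭` such that each `σ.app M` is a monomorphism (so `Γ M` is
naturally a submodule of `M`), `Γ (Γ M) = Γ M` (the inclusion `Γ (Γ M) ⟶ Γ M` is an
isomorphism) and `Γ (M / Γ M) = 0` (i.e. `Γ` applied to the cokernel of `σ.app M` is zero):
`Γ` is the torsion functor of a hereditary torsion class.  If `R^i Γ = 0` for all `i ≥ 2`
(right cohomological dimension at most one), then for every injective module `E` one has
`R^i Γ (Γ E) = 0` for all `i ≥ 1`: the torsion class is weakly stable. -/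
theorem torsion_functor_cohomological_dimension_le_one_weakly_stable
    (A : Type u) [Ring A]
    (Γ : ModuleCat.{u} A ⥤ ModuleCat.{u} A) [Γ.Additive]
    [PreservesFiniteLimits Γ]
    (σ : Γ ⟶ 𝟭 (ModuleCat.{u} A))
    (hmono : ∀ M : ModuleCat.{u} A, Mono (σ.app M))
    (hidem : ∀ M : ModuleCat.{u} A, IsIso (σ.app (Γ.obj M)))
    (hrad : ∀ M : ModuleCat.{u} A, IsZero (Γ.obj (cokernel (σ.app M))))
    (hdim : ∀ i : ℕ, 2 ≤ i → ∀ M : ModuleCat.{u} A, IsZero ((Γ.rightDerived i).obj M)) :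
    ∀ E : ModuleCat.{u} A, Injective E →
      ∀ i : ℕ, 1 ≤ i → IsZero ((Γ.rightDerived i).obj (Γ.obj E)) := by
  intro E hE i hi
  haveI := hE
  haveI := hmono E
  match i, hi with
  | (i+2), _ => exact hdim (i+2) (by omega) _
  | 1, _ =>
    refine IsZero.of_iso ?_ ((WeaklyStableAux.res Γ σ E).isoRightDerivedObj Γ 1)
    have hexact : ((Γ.mapHomologicalComplex _).obj (WeaklyStableAux.J Γ σ E)).ExactAt 1 := by
      rw [HomologicalComplex.exactAt_iff' _ 0 1 2 (by simp) (by simp)]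
      have hf : Γ.map ((WeaklyStableAux.J Γ σ E).d 0 1) = 0 := by
        erw [WeaklyStableAux.J_d0, Γ.map_comp,
          (hrad E).eq_of_tgt (Γ.map (cokernel.π (σ.app E))) 0, zero_comp]
      rw [ShortComplex.exact_iff_mono _ hf]
      -- Mono (Γ.map ((J).d 1 2)) = Mono (Γ.map (I.d 0 1))
      have h1 : (ShortComplex.mk ((WeaklyStableAux.I Γ σ E).ι.f 0)
          ((WeaklyStableAux.I Γ σ E).cocomplex.d 0 1)
          (WeaklyStableAux.I Γ σ E).ι_f_zero_comp_complex_d).Exact :=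
        ShortComplex.exact_of_f_is_kernel _ (WeaklyStableAux.I Γ σ E).isLimitKernelFork
      have h2 := h1.map_of_mono_of_preservesKernel Γ inferInstance inferInstance
      have hf2 : Γ.map ((WeaklyStableAux.I Γ σ E).ι.f 0) = 0 :=
        (hrad E).eq_of_src _ 0
      have h3 : Mono (Γ.map ((WeaklyStableAux.I Γ σ E).cocomplex.d 0 1)) :=
        (ShortComplex.exact_iff_mono _ hf2).1 h2
      show Mono (Γ.map ((WeaklyStableAux.J Γ σ E).d 1 2))
      rw [WeaklyStableAux.J_d_succ]
      exact h3
    erw [← HomologicalComplex.exactAt_iff_isZero_homology] at *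
    exact hexact
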